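/- Let X be a compact metric space and T = N × K : C(X)₊∖{0} → ℕ × ℝ₊∖{0} a map. Then there exists a non-decreasing Δ : (0,1) → (0,1) depending only on T with the following property: for any η > 0 there is a finite subset H ⊆ C(X)₊∖{0} such that for any unital C*-algebra B with a tracial state and any unital positive map φ : C(X) → B which is T-H-full, one has μ_{τ∘φ}(O_a) ≥ Δ(a) for all tracial states τ of B, all a ∈ (η, 1), and all open balls O_a of radius a. -/

import Mathlib

open MeasureTheory

/-- A tracial state on a unital C*-algebra. -/
def IsTracialState {A : Type*} [Ring A] [StarRing A] [Algebra ℂ A] [TopologicalSpace A]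
    (τ : A →ₗ[ℂ] ℂ) : Prop :=
  Continuous τ ∧ τ 1 = 1 ∧ (∀ a : A, 0 ≤ (τ (star a * a)).re ∧ (τ (star a * a)).im = 0) ∧
    ∀ a b : A, τ (a * b) = τ (b * a)

/-- A continuous function `f : X → ℂ` is nonnegative (a positive element of `C(X)`). -/
def CMNonneg {X : Type*} [TopologicalSpace X] (f : C(X, ℂ)) : Prop :=
  ∀ x : X, 0 ≤ (f x).re ∧ (f x).im = 0

/- ### Auxiliary lemmas -/

section TraceAux

variable {B : Type} [CStarAlgebra B]

lemma trace_re_nonneg_of_mem_closure (τ : B →ₗ[ℂ] ℂ) (h : IsTracialState τ) {p : B}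
    (hp : p ∈ AddSubmonoid.closure (Set.range fun s : B => star s * s)) :
    0 ≤ (τ p).re := by
  refine AddSubmonoid.closure_induction (fun x hx => ?_) (by simp) (fun x y hx hy px py => ?_) hp
  · obtain ⟨s, rfl⟩ := hx
    exact (h.2.2.1 s).1
  · rw [map_add, Complex.add_re]
    linarith

lemma trace_re_mono [PartialOrder B] [StarOrderedRing B] (τ : B →ₗ[ℂ] ℂ)
    (h : IsTracialState τ) {x y : B} (hxy : x ≤ y) : (τ x).re ≤ (τ y).re := by
  obtain ⟨p, hp, rfl⟩ := (StarOrderedRing.le_iff x y).mp hxy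
  rw [map_add, Complex.add_re]
  linarith [trace_re_nonneg_of_mem_closure τ h hp]

lemma trace_key [PartialOrder B] [StarOrderedRing B] (τ : B →ₗ[ℂ] ℂ)
    (h : IsTracialState τ) (b z : B) :
    (τ (star z * (star b * b) * z)).re ≤ ‖z‖ ^ 2 * (τ (star b * b)).re := by
  have h1 : star z * (star b * b) * z = star (b * z) * (b * z) := by
    simp [star_mul, mul_assoc]
  have h2 : τ (star (b * z) * (b * z)) = τ ((b * z) * star (b * z)) := h.2.2.2 _ _
  have h3 : (b * z) * star (b * z) = b * (z * star z) * star b := by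
    simp [star_mul, mul_assoc]
  have h4 : z * star z ≤ algebraMap ℝ B (‖z‖ ^ 2) :=
    CStarAlgebra.mul_star_le_algebraMap_norm_sq
  have h5 := star_right_conjugate_le_conjugate h4 b
  have h6 : b * algebraMap ℝ B (‖z‖ ^ 2) * star b
      = ((‖z‖ ^ 2 : ℝ) : ℂ) • (b * star b) := by
    rw [IsScalarTower.algebraMap_apply ℝ ℂ B, Algebra.algebraMap_eq_smul_one]
    rw [mul_smul_comm, mul_one, smul_mul_assoc]
    norm_cast
  have h7 : (τ (b * (z * star z) * star b)).re
      ≤ (τ (((‖z‖ ^ 2 : ℝ) : ℂ) • (b * star b))).re := by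
    rw [← h6]
    exact trace_re_mono τ h h5
  have h8 : (τ (((‖z‖ ^ 2 : ℝ) : ℂ) • (b * star b))).re
      = ‖z‖ ^ 2 * (τ (b * star b)).re := by
    rw [τ.map_smul, smul_eq_mul, Complex.mul_re]
    simp [← Complex.ofReal_pow]
  have h9 : τ (b * star b) = τ (star b * b) := h.2.2.2 _ _
  rw [h1, h2, h3]
  rw [h8, h9] at h7
  exact h7

end TraceAux

/-- A bump function centered at `x₀` with radius `r`. -/
noncomputable def cbump {X : Type*} [MetricSpace X] (x₀ : X) (r : ℝ) : C(X, ℂ) :=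
  ⟨fun x => ((max 0 (1 - dist x x₀ / r) : ℝ) : ℂ), by
    exact Complex.continuous_ofReal.comp (continuous_const.max (by fun_prop))⟩

section BumpAux

variable {X : Type*} [MetricSpace X] (x₀ : X) (r : ℝ)

lemma cbump_re (x : X) : ((cbump x₀ r) x).re = max 0 (1 - dist x x₀ / r) := by
  simp [cbump]

lemma cbump_im (x : X) : ((cbump x₀ r) x).im = 0 := by
  simp [cbump]

lemma cbump_nonneg : CMNonneg (cbump x₀ r) := fun x =>
  ⟨by rw [cbump_re]; exact le_max_left _ _, cbump_im x₀ r x⟩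

lemma cbump_ne_zero (hr : 0 < r) : cbump x₀ r ≠ 0 := by
  intro h
  have h1 : ((cbump x₀ r) x₀).re = 1 := by
    rw [cbump_re]
    simp
  rw [h] at h1
  simp at h1

lemma cbump_le_one (hr : 0 < r) (x : X) : ((cbump x₀ r) x).re ≤ 1 := by
  rw [cbump_re]
  have : 0 ≤ dist x x₀ / r := div_nonneg dist_nonneg hr.le
  apply max_le <;> linarith

lemma cbump_eq_zero (hr : 0 < r) {x : X} (hx : r ≤ dist x x₀) : ((cbump x₀ r) x).re = 0 := by
  rw [cbump_re, max_eq_left]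
  have : 1 ≤ dist x x₀ / r := (one_le_div hr).2 hx
  linarith

end BumpAux

lemma integral_re_le_measure {X : Type*} [MetricSpace X] [CompactSpace X] [MeasurableSpace X]
    [BorelSpace X] (μ : Measure X) [IsProbabilityMeasure μ] (f : C(X, ℂ)) {s : Set X}
    (hs : MeasurableSet s) (h1 : ∀ x, (f x).re ≤ 1) (hv : ∀ x ∉ s, (f x).re = 0) :
    (∫ x, f x ∂μ).re ≤ (μ s).toReal := by
  have hcs : ∀ g : X → ℝ, Continuous g → Integrable g μ := by
    intro g hg
    exact hg.integrable_of_hasCompactSupport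
      (IsCompact.of_isClosed_subset isCompact_univ (isClosed_tsupport g) (Set.subset_univ _))
  have hintC : Integrable (fun x => f x) μ := by
    refine Integrable.mono' (g := fun x => ‖f x‖) (hcs _ f.continuous.norm) ?_ ?_
    · exact f.continuous.aestronglyMeasurable
    · filter_upwards with x using le_refl _
  have hre : (∫ x, f x ∂μ).re = ∫ x, (f x).re ∂μ := by
    have := integral_re (𝕜 := ℂ) (f := fun x => f x) (μ := μ) hintC
    simp only [RCLike.re_to_complex] at this
    exact this.symm
  rw [hre]
  have hintR : Integrable (fun x => (f x).re) μ := hcs _ (Complex.continuous_re.comp f.continuous)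
  have hind : Integrable (s.indicator fun _ => (1 : ℝ)) μ :=
    (integrable_indicator_iff hs).2 (integrableOn_const (measure_ne_top μ s))
  calc ∫ x, (f x).re ∂μ ≤ ∫ x, s.indicator (fun _ => (1 : ℝ)) x ∂μ := by
        apply integral_mono hintR hind
        intro x
        by_cases hx : x ∈ s
        · rw [Set.indicator_of_mem hx]
          exact h1 x
        · have hfx := hv x hx
          simp [Set.indicator_of_notMem hx, hfx]
    _ = (μ s).toReal := by
        rw [integral_indicator_const (1 : ℝ) hs, smul_eq_mul, mul_one, measureReal_def]

/-- Given a fullness datum `T = N × K`, there is a non-decreasing `Δ : (0,1) → (0,1)`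
such that for every `η > 0` there is a finite set `H` of nonzero positive functions
with: every unital positive `T`-`H`-full map `φ : C(X) → B` into a unital C*-algebra
with a tracial state `τ` satisfies `μ_{τ∘φ}(O_a) ≥ Δ(a)` for all `a ∈ (η, 1)` and all
open balls `O_a` of radius `a`. -/
theorem stmt_10 {X : Type*} [MetricSpace X] [CompactSpace X] [MeasurableSpace X] [BorelSpace X]
    (N : C(X, ℂ) → ℕ) (K : C(X, ℂ) → ℝ) :
    ∃ Δ : ℝ → ℝ,
      (∀ a b : ℝ, 0 < a → a ≤ b → b < 1 → Δ a ≤ Δ b) ∧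
      (∀ a : ℝ, 0 < a → a < 1 → 0 < Δ a ∧ Δ a < 1) ∧
      ∀ η : ℝ, 0 < η →
        ∃ H : Finset C(X, ℂ), (∀ f ∈ H, CMNonneg f ∧ f ≠ 0) ∧
          ∀ (B : Type) [CStarAlgebra B],
            ∀ φ : C(X, ℂ) →ₗ[ℂ] B, φ 1 = 1 →
              (∀ f : C(X, ℂ), CMNonneg f → ∃ b : B, φ f = star b * b) →
              (∀ f ∈ H, ∃ z : Fin (N f) → B, (∀ j, ‖z j‖ ≤ K f) ∧
                ∑ j, star (z j) * φ f * z j = 1) →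
              ∀ τ : B →ₗ[ℂ] ℂ, IsTracialState τ →
                ∀ μ : Measure X, IsProbabilityMeasure μ →
                  (∀ f : C(X, ℂ), τ (φ f) = ∫ z, f z ∂μ) →
                  ∀ a : ℝ, η < a → a < 1 → ∀ z : X,
                    ENNReal.ofReal (Δ a) ≤ μ (Metric.ball z a) := by
  classical
  by_cases hX : Nonempty X
  case neg =>
    refine ⟨fun _ => 1/2, fun a b _ _ _ => le_refl _, fun a _ _ => by norm_num, fun η _ =>
      ⟨∅, by simp, ?_⟩⟩
    intro B _ φ _ _ _ τ _ μ _ _ a _ _ z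
    exact absurd ⟨z⟩ hX
  case pos =>
    set t : ℕ → ℝ := fun k => (1/2 : ℝ) ^ k with ht
    have ht_pos : ∀ k, 0 < t k := fun k => pow_pos (by norm_num) k
    have hcov : ∀ k : ℕ, ∃ s : Finset X, ∀ x : X, ∃ y ∈ s, dist x y < t k / 4 := by
      intro k
      obtain ⟨s, -, hfin, hcov⟩ :=
        finite_cover_balls_of_compact (isCompact_univ (X := X)) (e := t k / 4) (by positivity)
      refine ⟨hfin.toFinset, fun x => ?_⟩
      have hx := hcov (Set.mem_univ x)
      simp only [Set.mem_iUnion] at hx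
      obtain ⟨y, hy, hxy⟩ := hx
      exact ⟨y, hfin.mem_toFinset.2 hy, by simpa [Metric.mem_ball] using hxy⟩
    choose S hS using hcov
    have hSne : ∀ k, (S k).Nonempty := fun k => by
      obtain ⟨y, hy, -⟩ := hS k (Classical.arbitrary X)
      exact ⟨y, hy⟩
    set F : ℕ → Finset C(X, ℂ) := fun k => (S k).image (fun y => cbump y (t k / 4)) with hF
    have hFne : ∀ k, (F k).Nonempty := fun k => (hSne k).image _
    set c : ℕ → ℝ := fun k =>
      (F k).inf' (hFne k) (fun f => 1 / ((N f : ℝ) * (K f) ^ 2 + 1)) with hc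
    have hMpos : ∀ f : C(X, ℂ), (0 : ℝ) < (N f : ℝ) * (K f) ^ 2 + 1 := fun f => by positivity
    have hc_pos : ∀ k, 0 < c k := by
      intro k
      rw [hc, Finset.lt_inf'_iff]
      intro f _
      positivity
    set d : ℕ → ℝ := fun k => min (1/2) ((Finset.range (k+1)).inf' (by simp) c) with hd
    have hd_pos : ∀ k, 0 < d k := fun k => lt_min (by norm_num) (by
      rw [Finset.lt_inf'_iff]; intro j _; exact hc_pos j)
    have hd_lt1 : ∀ k, d k < 1 := fun k => lt_of_le_of_lt (min_le_left _ _) (by norm_num)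
    have hd_le_c : ∀ k, d k ≤ c k := fun k =>
      (min_le_right _ _).trans (Finset.inf'_le _ (by simp))
    have hd_anti : ∀ k l, k ≤ l → d l ≤ d k := by
      intro k l hkl
      apply min_le_min (le_refl _)
      apply Finset.le_inf'
      intro j hj
      exact Finset.inf'_le _ (Finset.mem_range.mpr
        (lt_of_lt_of_le (Finset.mem_range.mp hj) (by omega)))
    have hEx : ∀ a : ℝ, 0 < a → ∃ k, t k < a := fun a ha =>
      exists_pow_lt_of_lt_one ha (by norm_num)
    set Δ : ℝ → ℝ := fun a => if h : ∃ k, t k < a then d (Nat.find h) else 1/2 with hΔ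
    have hΔ_eq : ∀ (a : ℝ) (h : ∃ k, t k < a), Δ a = d (Nat.find h) := fun a h => dif_pos h
    refine ⟨Δ, ?_, ?_, ?_⟩
    · intro a b ha hab _
      have hea := hEx a ha
      have heb := hEx b (lt_of_lt_of_le ha hab)
      rw [hΔ_eq a hea, hΔ_eq b heb]
      exact hd_anti _ _ (Nat.find_min' heb (lt_of_lt_of_le (Nat.find_spec hea) hab))
    · intro a ha _
      rw [hΔ_eq a (hEx a ha)]
      exact ⟨hd_pos _, hd_lt1 _⟩
    · intro η hη
      obtain ⟨K₀, hK₀⟩ : ∃ k, t k < η := hEx η hη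
      refine ⟨(Finset.range (K₀+1)).biUnion F, ?_, ?_⟩
      · intro f hf
        simp only [Finset.mem_biUnion, hF, Finset.mem_image] at hf
        obtain ⟨k, -, y, -, rfl⟩ := hf
        have hk := ht_pos k
        exact ⟨cbump_nonneg y _, cbump_ne_zero y _ (by positivity)⟩
      · intro B _ φ hφ1 hφpos hfull τ hτ μ hμ hrep a haη ha1 z
        have ha0 : 0 < a := lt_trans hη haη
        have hexa : ∃ k, t k < a := hEx a ha0
        set n := Nat.find hexa with hn
        have hna : t n < a := Nat.find_spec hexa
        have hnK : n ≤ K₀ := Nat.find_min' hexa (lt_trans hK₀ haη)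
        obtain ⟨y, hyS, hyz⟩ := hS n z
        set f := cbump y (t n / 4) with hfdef
        have hrpos : 0 < t n / 4 := by have := ht_pos n; positivity
        have hfF : f ∈ F n := Finset.mem_image.2 ⟨y, hyS, rfl⟩
        have hfH : f ∈ (Finset.range (K₀+1)).biUnion F :=
          Finset.mem_biUnion.2 ⟨n, Finset.mem_range.2 (by omega), hfF⟩
        obtain ⟨b, hb⟩ := hφpos f (cbump_nonneg y _)
        obtain ⟨w, hwK, hwsum⟩ := hfull f hfH
        letI := CStarAlgebra.spectralOrder B
        haveI := CStarAlgebra.spectralOrderedRing B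
        set tv : ℝ := (τ (φ f)).re with htv
        have htv0 : 0 ≤ tv := by
          rw [htv, hb]
          exact (hτ.2.2.1 b).1
        have hterm : ∀ j : Fin (N f), (τ (star (w j) * φ f * w j)).re ≤ (K f) ^ 2 * tv := by
          intro j
          have h1 : (τ (star (w j) * φ f * w j)).re ≤ ‖w j‖ ^ 2 * tv := by
            rw [htv, hb]
            exact trace_key τ hτ b (w j)
          refine h1.trans (mul_le_mul_of_nonneg_right ?_ htv0)
          have h2 := hwK j
          have h3 : (0:ℝ) ≤ ‖w j‖ := norm_nonneg _
          nlinarith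
        have hsum : (1 : ℝ) ≤ (N f : ℝ) * ((K f) ^ 2 * tv) := by
          have h1 : τ (∑ j, star (w j) * φ f * w j) = 1 := by rw [hwsum, hτ.2.1]
          have h2 : (1 : ℝ) = ∑ j : Fin (N f), (τ (star (w j) * φ f * w j)).re := by
            have h3 := congrArg Complex.re h1
            rw [map_sum, Complex.re_sum] at h3
            simpa using h3.symm
          rw [h2]
          calc ∑ j : Fin (N f), (τ (star (w j) * φ f * w j)).re
              ≤ ∑ _j : Fin (N f), (K f) ^ 2 * tv := Finset.sum_le_sum fun j _ => hterm j
            _ = (N f : ℝ) * ((K f) ^ 2 * tv) := by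
                rw [Finset.sum_const, Finset.card_univ, Fintype.card_fin, nsmul_eq_mul]
        have htvlb : 1 / ((N f : ℝ) * (K f) ^ 2 + 1) ≤ tv := by
          rw [div_le_iff₀ (hMpos f)]
          nlinarith
        have hΔa : Δ a ≤ tv := by
          rw [hΔ_eq a hexa]
          exact ((hd_le_c n).trans ((Finset.inf'_le _ hfF).trans htvlb))
        have hball : tv ≤ (μ (Metric.ball z a)).toReal := by
          rw [htv, hrep f]
          refine integral_re_le_measure μ f measurableSet_ball
            (fun x => cbump_le_one y _ hrpos x) ?_
          intro x hx
          rw [Metric.mem_ball, not_lt] at hx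
          apply cbump_eq_zero y _ hrpos
          have h1 : dist x z ≤ dist x y + dist y z := dist_triangle x y z
          have h2 : dist y z = dist z y := dist_comm y z
          have h3 := ht_pos n
          linarith
        calc ENNReal.ofReal (Δ a) ≤ ENNReal.ofReal ((μ (Metric.ball z a)).toReal) :=
              ENNReal.ofReal_le_ofReal (hΔa.trans hball)
          _ = μ (Metric.ball z a) := ENNReal.ofReal_toReal (measure_ne_top μ _)
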